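/- Let x = P(x) be a quadratic MPS with least fixed point q* > 0 and Jacobian B(x), and suppose 0 ≤ z ≤ q*, ρ(B(z)) < 1. Then N_P(z) = z + (I − B(z))^{−1}(P(z) − z) is well-defined, and q* ≥ N_P(z) componentwise; moreover (I − B(z))^{−1} = Σ_{i=0}^∞ B(z)^i is entrywise nonnegative. -/

import Mathlib

open Matrix MvPolynomial

/-- Evaluation of a vector of multivariate polynomials. -/
noncomputable def evalVec {n : ℕ} (P : Fin n → MvPolynomial (Fin n) ℝ) (x : Fin n → ℝ) :
    Fin n → ℝ := fun i => MvPolynomial.eval x (P i)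

/-- The Jacobian matrix B(x)_{ij} = ∂P_i/∂x_j evaluated at x. -/
noncomputable def jacob {n : ℕ} (P : Fin n → MvPolynomial (Fin n) ℝ) (x : Fin n → ℝ) :
    Matrix (Fin n) (Fin n) ℝ :=
  Matrix.of fun i j => MvPolynomial.eval x (MvPolynomial.pderiv j (P i))

/-- The Newton operator N_P(z) = z + (I - B(z))⁻¹ (P(z) - z). -/
noncomputable def newtonOp {n : ℕ} (P : Fin n → MvPolynomial (Fin n) ℝ) (z : Fin n → ℝ) :
    Fin n → ℝ := z + (1 - jacob P z)⁻¹ *ᵥ (evalVec P z - z)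

/-- The spectral radius of a real matrix, via its complexification. -/
noncomputable def specRad {n : ℕ} (A : Matrix (Fin n) (Fin n) ℝ) : ENNReal :=
  spectralRadius ℂ (A.map (algebraMap ℝ ℂ))



variable {n : ℕ}

lemma sum_ge_single (m : Fin n →₀ ℕ) (k : Fin n) : m k ≤ m.sum fun _ e => e := by
  classical
  rw [Finsupp.sum_fintype _ _ (fun _ => rfl)]
  exact Finset.single_le_sum (f := fun i => m i) (fun _ _ => Nat.zero_le _) (Finset.mem_univ k)

lemma sum_ge_pair (m : Fin n →₀ ℕ) {i k : Fin n} (hik : i ≠ k) :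
    m i + m k ≤ m.sum fun _ e => e := by
  classical
  rw [Finsupp.sum_fintype _ _ (fun _ => rfl)]
  rw [← Finset.sum_pair hik]
  exact Finset.sum_le_sum_of_subset (Finset.subset_univ _)

lemma cls1 (m : Fin n →₀ ℕ) (h : (m.sum fun _ e => e) ≤ 1) :
    m = 0 ∨ ∃ i, m = Finsupp.single i 1 := by
  by_cases hm : m = 0
  · exact Or.inl hm
  · right
    obtain ⟨i, hi⟩ := Finsupp.ne_iff.mp hm
    simp only [Finsupp.coe_zero, Pi.zero_apply] at hi
    refine ⟨i, Finsupp.ext fun k => ?_⟩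
    rw [Finsupp.single_apply]
    split_ifs with hk
    · subst hk
      have := sum_ge_single m i
      omega
    · have := sum_ge_pair m (fun hc : i = k => hk hc)
      have h2 := sum_ge_single m i
      omega

lemma cls2 (m : Fin n →₀ ℕ) (h : (m.sum fun _ e => e) ≤ 2) :
    m = 0 ∨ (∃ i, m = Finsupp.single i 1) ∨
      (∃ i j, m = Finsupp.single i 1 + Finsupp.single j 1) := by
  by_cases hm : m = 0
  · exact Or.inl hm
  · right
    obtain ⟨i, hi⟩ := Finsupp.ne_iff.mp hm
    simp only [Finsupp.coe_zero, Pi.zero_apply] at hi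
    have hle : Finsupp.single i 1 ≤ m := by
      rw [Finsupp.single_le_iff]; omega
    set m' := m - Finsupp.single i 1 with hm'
    have hadd : Finsupp.single i 1 + m' = m := add_tsub_cancel_of_le hle
    have hsum : (m'.sum fun _ e => e) ≤ 1 := by
      have : ((Finsupp.single i 1 + m').sum fun _ e => e)
          = 1 + m'.sum fun _ e => e := by
        rw [Finsupp.sum_add_index' (fun _ => rfl) (fun _ _ _ => rfl),
          Finsupp.sum_single_index rfl]
      rw [hadd] at this
      omega
    rcases cls1 m' hsum with h0 | ⟨j, hj⟩
    · exact Or.inl ⟨i, by rw [← hadd, h0, add_zero]⟩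
    · exact Or.inr ⟨i, j, by rw [← hadd, hj]⟩

lemma taylor_c (z q : Fin n → ℝ) (c : ℝ) :
    2 * (eval q (C c : MvPolynomial (Fin n) ℝ) - eval z (C c)) =
      ∑ k, (eval z (pderiv k (C c : MvPolynomial (Fin n) ℝ))
        + eval q (pderiv k (C c))) * (q k - z k) := by
  simp [pderiv_C]

lemma taylor_x (z q : Fin n → ℝ) (c : ℝ) (i : Fin n) :
    2 * (eval q (C c * X i) - eval z (C c * X i)) =
      ∑ k, (eval z (pderiv k (C c * X i)) + eval q (pderiv k (C c * X i))) * (q k - z k) := by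
  classical
  simp only [pderiv_C_mul, pderiv_X, _root_.map_mul, eval_C, eval_X, Pi.single_apply,
    apply_ite (eval z), apply_ite (eval q), _root_.map_one, _root_.map_zero]
  simp only [ite_mul, one_mul, zero_mul, mul_ite, mul_zero, mul_one, mul_add, add_mul]
  simp only [Finset.sum_add_distrib, Finset.sum_ite_eq, Finset.sum_ite_eq',
    Finset.mem_univ, if_true]
  ring

lemma taylor_xx (z q : Fin n → ℝ) (c : ℝ) (i j : Fin n) :
    2 * (eval q (C c * (X i * X j)) - eval z (C c * (X i * X j))) =
      ∑ k, (eval z (pderiv k (C c * (X i * X j)))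
        + eval q (pderiv k (C c * (X i * X j)))) * (q k - z k) := by
  classical
  simp only [pderiv_C_mul, pderiv_mul, pderiv_C, pderiv_X, _root_.map_add, _root_.map_mul,
    eval_C, eval_X, Pi.single_apply, _root_.map_zero, zero_mul, mul_zero, add_zero, zero_add]
  simp only [apply_ite (eval z), apply_ite (eval q), _root_.map_one, _root_.map_zero]
  simp only [ite_mul, one_mul, zero_mul, mul_ite, mul_zero, mul_one, mul_add, add_mul]
  simp only [Finset.sum_add_distrib, Finset.sum_ite_eq, Finset.sum_ite_eq',
    Finset.mem_univ, if_true]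
  ring


lemma taylor_monomial' (z q : Fin n → ℝ) (m : Fin n →₀ ℕ) (hm : (m.sum fun _ e => e) ≤ 2)
    (c : ℝ) :
    2 * (eval q (monomial m c) - eval z (monomial m c)) =
      ∑ k, (eval z (pderiv k (monomial m c)) + eval q (pderiv k (monomial m c))) * (q k - z k) := by
  rcases cls2 m hm with rfl | ⟨i, rfl⟩ | ⟨i, j, rfl⟩
  · rw [← C_apply]; exact taylor_c z q c
  · have h : monomial (Finsupp.single i 1) c = C c * X i := by
      simp [X, C_mul_monomial]
    rw [h]; exact taylor_x z q c i
  · have h : monomial (Finsupp.single i 1 + Finsupp.single j 1) c = C c * (X i * X j) := by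
      simp [X, monomial_mul, C_mul_monomial]
    rw [h]; exact taylor_xx z q c i j

lemma taylor2 (p : MvPolynomial (Fin n) ℝ) (hdeg : p.totalDegree ≤ 2) (z q : Fin n → ℝ) :
    2 * (eval q p - eval z p) =
      ∑ k, (eval z (pderiv k p) + eval q (pderiv k p)) * (q k - z k) := by
  conv_lhs => rw [← support_sum_monomial_coeff p]
  conv_rhs => rw [← support_sum_monomial_coeff p]
  rw [map_sum (eval q), map_sum (eval z), ← Finset.sum_sub_distrib, Finset.mul_sum]
  have : ∀ k : Fin n,
      (eval z (pderiv k (∑ m ∈ p.support, monomial m (coeff m p)))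
        + eval q (pderiv k (∑ m ∈ p.support, monomial m (coeff m p)))) * (q k - z k)
      = ∑ m ∈ p.support,
          (eval z (pderiv k (monomial m (coeff m p)))
            + eval q (pderiv k (monomial m (coeff m p)))) * (q k - z k) := by
    intro k
    rw [map_sum (pderiv k), map_sum (eval z), map_sum (eval q), ← Finset.sum_add_distrib,
      Finset.sum_mul]
  simp_rw [this]
  rw [Finset.sum_comm]
  refine Finset.sum_congr rfl fun m hm => ?_
  exact taylor_monomial' z q m (le_trans (le_totalDegree hm) hdeg) (coeff m p)

lemma eval_nonneg' (p : MvPolynomial (Fin n) ℝ) (hp : ∀ m, 0 ≤ coeff m p)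
    {x : Fin n → ℝ} (hx : 0 ≤ x) : 0 ≤ eval x p := by
  rw [eval_eq]
  refine Finset.sum_nonneg fun m _ => mul_nonneg (hp m) (Finset.prod_nonneg fun i _ =>
    pow_nonneg (hx i) _)

lemma eval_mono' (p : MvPolynomial (Fin n) ℝ) (hp : ∀ m, 0 ≤ coeff m p)
    {x y : Fin n → ℝ} (hx : 0 ≤ x) (hxy : x ≤ y) : eval x p ≤ eval y p := by
  rw [eval_eq, eval_eq]
  refine Finset.sum_le_sum fun m _ => mul_le_mul_of_nonneg_left ?_ (hp m)
  refine Finset.prod_le_prod (fun i _ => pow_nonneg (hx i) _) fun i _ =>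
    pow_le_pow_left₀ (hx i) (hxy i) _

lemma coeff_pderiv_nonneg (p : MvPolynomial (Fin n) ℝ) (hp : ∀ m, 0 ≤ coeff m p) (j : Fin n)
    (m' : Fin n →₀ ℕ) : 0 ≤ coeff m' (pderiv j p) := by
  conv_rhs => rw [← support_sum_monomial_coeff p]
  rw [map_sum (pderiv j)]
  simp_rw [pderiv_monomial]
  rw [MvPolynomial.coeff_sum]
  refine Finset.sum_nonneg fun m _ => ?_
  rw [coeff_monomial]
  split_ifs
  · exact mul_nonneg (hp m) (Nat.cast_nonneg _)
  · exact le_refl 0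

lemma entry_bound {n : ℕ} (A : Matrix (Fin n) (Fin n) ℝ)
    (h : spectralRadius ℂ (A.map (algebraMap ℝ ℂ)) < 1) :
    ∃ r : ℝ, 0 ≤ r ∧ r < 1 ∧ ∀ᶠ m in Filter.atTop, ∀ i j, |((A ^ m) i j)| ≤ r ^ m := by
  letI : NormedRing (Matrix (Fin n) (Fin n) ℂ) := Matrix.linftyOpNormedRing
  letI : NormedAlgebra ℂ (Matrix (Fin n) (Fin n) ℂ) := Matrix.linftyOpNormedAlgebra
  letI : CompleteSpace (Matrix (Fin n) (Fin n) ℂ) :=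
    FiniteDimensional.complete ℂ (Matrix (Fin n) (Fin n) ℂ)
  set Ac := A.map (algebraMap ℝ ℂ) with hAc
  have hg := spectrum.pow_nnnorm_pow_one_div_tendsto_nhds_spectralRadius Ac
  obtain ⟨r, hρr, hr1⟩ := ENNReal.lt_iff_exists_nnreal_btwn.mp h
  have hr1' : (r : ℝ) < 1 := by exact_mod_cast hr1
  have hev : ∀ᶠ m : ℕ in Filter.atTop, (‖Ac ^ m‖₊ : ENNReal) ^ (1 / (m : ℝ)) < (r : ENNReal) :=
    hg.eventually_lt_const hρr
  refine ⟨r, r.coe_nonneg, hr1', ?_⟩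
  filter_upwards [hev, Filter.eventually_ge_atTop 1] with m hm hm1 i j
  have hmne : (m : ℝ) ≠ 0 := Nat.cast_ne_zero.mpr (by omega)
  have hlt : (‖Ac ^ m‖₊ : ENNReal) < (r : ENNReal) ^ (m : ℝ) := by
    have := ENNReal.rpow_lt_rpow hm (by positivity : (0:ℝ) < (m:ℝ))
    rwa [← ENNReal.rpow_mul, one_div_mul_cancel hmne, ENNReal.rpow_one] at this
  have hnorm : ‖Ac ^ m‖ ≤ (r : ℝ) ^ m := by
    rw [ENNReal.rpow_natCast, ← ENNReal.coe_pow, ENNReal.coe_lt_coe] at hlt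
    calc ‖Ac ^ m‖ = ((‖Ac ^ m‖₊ : NNReal) : ℝ) := rfl
      _ ≤ ((r ^ m : NNReal) : ℝ) := by exact_mod_cast hlt.le
      _ = (r : ℝ) ^ m := by push_cast; ring
  have hentry : ‖(Ac ^ m) i j‖ ≤ ‖Ac ^ m‖ := by
    rw [Matrix.linfty_opNorm_def]
    calc ‖(Ac ^ m) i j‖ = ((‖(Ac ^ m) i j‖₊ : NNReal) : ℝ) := rfl
      _ ≤ ((∑ k, ‖(Ac ^ m) i k‖₊ : NNReal) : ℝ) := by
          exact_mod_cast Finset.single_le_sum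
            (f := fun k => ‖(Ac ^ m) i k‖₊) (fun _ _ => zero_le) (Finset.mem_univ j)
      _ ≤ _ := by
          exact_mod_cast Finset.le_sup (f := fun i => ∑ k, ‖(Ac ^ m) i k‖₊) (Finset.mem_univ i)
  have hmap : Ac ^ m = (A ^ m).map (algebraMap ℝ ℂ) := by
    rw [hAc, ← RingHom.mapMatrix_apply, ← RingHom.mapMatrix_apply, map_pow]
  rw [hmap] at hentry hnorm
  have : ‖((A ^ m) i j : ℂ)‖ = |(A ^ m) i j| := by
    simp [Complex.norm_real, Matrix.map_apply]
  have h2 : ‖((A ^ m).map (algebraMap ℝ ℂ)) i j‖ = |(A ^ m) i j| := by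
    simp [Matrix.map_apply, Complex.norm_real]
  calc |(A ^ m) i j| = ‖((A ^ m).map (algebraMap ℝ ℂ)) i j‖ := h2.symm
    _ ≤ _ := hentry
    _ ≤ (r : ℝ) ^ m := hnorm

lemma geom_all {n : ℕ} (A : Matrix (Fin n) (Fin n) ℝ)
    (h : spectralRadius ℂ (A.map (algebraMap ℝ ℂ)) < 1) :
    Summable (fun m : ℕ => A ^ m) ∧ (1 - A) * (∑' m : ℕ, A ^ m) = 1 := by
  obtain ⟨r, hr0, hr1, hev⟩ := entry_bound A h
  have hs_entry : ∀ i j, Summable fun m : ℕ => (A ^ m) i j := by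
    intro i j
    refine Summable.of_norm_bounded_eventually_nat
      (summable_geometric_of_lt_one hr0 hr1) ?_
    filter_upwards [hev] with m hm
    simpa [Real.norm_eq_abs] using hm i j
  have hsum : Summable fun m : ℕ => A ^ m := by
    refine Pi.summable.mpr ?_
    intro i
    rw [Pi.summable]
    exact fun j => hs_entry i j
  refine ⟨hsum, ?_⟩
  have htend : Filter.Tendsto (fun m : ℕ => A ^ m) Filter.atTop (nhds 0) := by
    refine tendsto_pi_nhds.mpr ?_
    intro i
    rw [tendsto_pi_nhds]
    intro j
    simpa using (hs_entry i j).tendsto_atTop_zero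
  have h1 : HasSum (fun m : ℕ => A ^ m) (∑' m : ℕ, A ^ m) := hsum.hasSum
  have h2 : HasSum (fun m : ℕ => (1 - A) * A ^ m) ((1 - A) * ∑' m : ℕ, A ^ m) :=
    h1.map (AddMonoidHom.mulLeft (1 - A)) (continuous_mul_left (1 - A))
  have h3 := h2.tendsto_sum_nat
  have h4 : ∀ N : ℕ, (∑ m ∈ Finset.range N, (1 - A) * A ^ m) = 1 - A ^ N := by
    intro N
    induction N with
    | zero => simp
    | succ N ih =>
      rw [Finset.sum_range_succ, ih, sub_mul, one_mul, pow_succ']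
      abel
  simp_rw [h4] at h3
  have h5 : Filter.Tendsto (fun N : ℕ => 1 - A ^ N) Filter.atTop (nhds (1 - 0)) :=
    tendsto_const_nhds.sub htend
  rw [sub_zero] at h5
  exact tendsto_nhds_unique h3 h5

theorem stmt18 {n : ℕ} (P : Fin n → MvPolynomial (Fin n) ℝ)
    (hdeg : ∀ i, (P i).totalDegree ≤ 2) (hpos : ∀ i m, 0 ≤ (P i).coeff m)
    (q : Fin n → ℝ) (hq : ∀ i, 0 < q i) (hfix : evalVec P q = q)
    (hleast : ∀ r : Fin n → ℝ, 0 ≤ r → evalVec P r = r → q ≤ r)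
    (z : Fin n → ℝ) (hz0 : 0 ≤ z) (hzq : z ≤ q)
    (hrad : specRad (jacob P z) < 1) :
    IsUnit (1 - jacob P z).det ∧
    newtonOp P z ≤ q ∧
    Summable (fun i : ℕ => jacob P z ^ i) ∧
    (∑' i : ℕ, jacob P z ^ i) = (1 - jacob P z)⁻¹ ∧
    (∀ i j, 0 ≤ (1 - jacob P z)⁻¹ i j) := by
  classical
  set B := jacob P z with hB
  obtain ⟨hsum, hgeom⟩ := geom_all B hrad
  have hinv : (1 - B)⁻¹ = ∑' m : ℕ, B ^ m := Matrix.inv_eq_right_inv hgeom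
  have hdet : IsUnit (1 - B).det := Matrix.isUnit_det_of_right_inverse hgeom
  -- entrywise nonnegativity of B and its powers
  have hBnn : ∀ i j, 0 ≤ B i j := fun i j =>
    eval_nonneg' _ (coeff_pderiv_nonneg (P i) (hpos i) j) hz0
  have hpow : ∀ (m : ℕ) i j, 0 ≤ (B ^ m) i j := by
    intro m
    induction m with
    | zero => intro i j; rw [pow_zero]; by_cases h : i = j <;> simp [Matrix.one_apply, h]
    | succ m ih =>
      intro i j
      rw [pow_succ', Matrix.mul_apply]
      exact Finset.sum_nonneg fun k _ => mul_nonneg (hBnn i k) (ih k j)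
  have hMnn : ∀ i j, 0 ≤ (1 - B)⁻¹ i j := by
    intro i j
    rw [hinv]
    have e1 : (∑' m : ℕ, B ^ m) i j = ∑' m : ℕ, (B ^ m) i j := by
      exact (congrFun (tsum_apply (f := fun m : ℕ => (B ^ m : Fin n → Fin n → ℝ)) hsum (x := i)) j).trans
        (tsum_apply ((Pi.summable).mp hsum i))
    rw [e1]
    exact tsum_nonneg fun m => hpow m i j
  -- fixed point values
  have hq_eval : ∀ i, eval q (P i) = q i := fun i => congrFun hfix i
  have hdelta : ∀ j, 0 ≤ q j - z j := fun j => sub_nonneg.mpr (hzq j)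
  -- the vector w
  set w : Fin n → ℝ := (1 - B) *ᵥ (q - z) - (evalVec P z - z) with hwdef
  have hwnn : ∀ i, 0 ≤ w i := by
    intro i
    have hwi : w i = eval q (P i) - eval z (P i)
        - ∑ k, eval z (pderiv k (P i)) * (q k - z k) := by
      simp only [hwdef, Matrix.sub_mulVec, Matrix.one_mulVec, Pi.sub_apply, Matrix.mulVec,
        dotProduct, evalVec, hq_eval i]
      have hBij : ∀ k, B i k = eval z (pderiv k (P i)) := fun k => rfl
      simp only [hBij, Pi.sub_apply]
      ring
    have key := taylor2 (P i) (hdeg i) z q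
    have h2w : 2 * w i = ∑ k, (eval q (pderiv k (P i)) - eval z (pderiv k (P i)))
        * (q k - z k) := by
      have expand : ∑ k, (eval q (pderiv k (P i)) - eval z (pderiv k (P i))) * (q k - z k)
          = ∑ k, ((eval z (pderiv k (P i)) + eval q (pderiv k (P i))) * (q k - z k)
              - 2 * (eval z (pderiv k (P i)) * (q k - z k))) := by
        refine Finset.sum_congr rfl fun k _ => by ring
      rw [expand, Finset.sum_sub_distrib, ← key, hwi, ← Finset.mul_sum]
      ring
    have hterms : 0 ≤ ∑ k, (eval q (pderiv k (P i)) - eval z (pderiv k (P i)))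
        * (q k - z k) := by
      refine Finset.sum_nonneg fun k _ => mul_nonneg ?_ (hdelta k)
      exact sub_nonneg.mpr (eval_mono' _ (coeff_pderiv_nonneg (P i) (hpos i) k) hz0 hzq)
    nlinarith [h2w, hterms]
  -- main inequality
  have hleft : (1 - B)⁻¹ * (1 - B) = 1 := by
    rw [hinv]
    exact mul_eq_one_comm.mp hgeom
  have hmain : q - newtonOp P z = (1 - B)⁻¹ *ᵥ w := by
    rw [hwdef, Matrix.mulVec_sub, Matrix.mulVec_mulVec, hleft, Matrix.one_mulVec]
    have : newtonOp P z = z + (1 - B)⁻¹ *ᵥ (evalVec P z - z) := rfl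
    rw [this]
    ext i
    simp only [Pi.sub_apply, Pi.add_apply]
    ring
  have hle : newtonOp P z ≤ q := by
    intro i
    have : 0 ≤ ((1 - B)⁻¹ *ᵥ w) i := by
      rw [Matrix.mulVec, dotProduct]
      exact Finset.sum_nonneg fun j _ => mul_nonneg (hMnn i j) (hwnn j)
    rw [← hmain] at this
    simpa [sub_nonneg] using this
  exact ⟨hdet, hle, hsum, hinv.symm, hMnn⟩
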